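/- A (possibly infinite) graph admits a k-flow if and only if it admits a non-elusive ℤ_k-flow. -/

import Mathlib

set_option linter.unusedSectionVars false

/-- The oriented edges of `G` crossing from `X` to its complement. -/
def orientedCut {V : Type*} (G : SimpleGraph V) (X : Set V) : Set (V × V) :=
  {p | G.Adj p.1 p.2 ∧ p.1 ∈ X ∧ p.2 ∉ X}

/-- A `k`-flow: an antisymmetric integer-valued map on oriented edges with values in
`{-(k-1),…,-1,1,…,k-1}` summing to zero over every finite oriented cut. -/
def IsKFlow {V : Type*} (G : SimpleGraph V) (k : ℕ) (f : V → V → ℤ) : Prop :=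
  (∀ x y, G.Adj x y → f x y ≠ 0 ∧ |f x y| < (k : ℤ)) ∧
  (∀ x y : V, f y x = - f x y) ∧
  ∀ X : Set V, (orientedCut G X).Finite → ∑ᶠ p ∈ orientedCut G X, f p.1 p.2 = 0

/-- A non-elusive `ℤ_k`-flow. -/
def IsNonElusiveZModFlow {V : Type*} (G : SimpleGraph V) (k : ℕ)
    (g : V → V → ZMod k) : Prop :=
  (∀ x y, G.Adj x y → g x y ≠ 0) ∧
  (∀ x y : V, g y x = - g x y) ∧
  ∀ X : Set V, (orientedCut G X).Finite → ∑ᶠ p ∈ orientedCut G X, g p.1 p.2 = 0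

namespace KFlowAux

/-- Paths of length at most `n` in a relation. -/
def pathLe {B : Type*} (r : B → B → Prop) : ℕ → B → B → Prop
  | 0 => Eq
  | n+1 => fun x y => x = y ∨ ∃ z, r x z ∧ pathLe r n z y

theorem pathLe_refl {B : Type*} (r : B → B → Prop) (n : ℕ) (x : B) : pathLe r n x x := by
  cases n with
  | zero => rfl
  | succ n => exact Or.inl rfl

theorem pathLe_succ {B : Type*} {r : B → B → Prop} {n : ℕ} {x y : B} (h : pathLe r n x y) :
    pathLe r (n+1) x y := by
  induction n generalizing x with
  | zero => exact Or.inl h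
  | succ n ih =>
    rcases h with h | ⟨z, hz, hp⟩
    · exact Or.inl h
    · exact Or.inr ⟨z, hz, ih hp⟩

theorem pathLe_snoc {B : Type*} {r : B → B → Prop} {n : ℕ} {x y z : B}
    (h : pathLe r n x y) (hr : r y z) : pathLe r (n+1) x z := by
  induction n generalizing x with
  | zero => cases h; exact Or.inr ⟨z, hr, rfl⟩
  | succ n ih =>
    rcases h with rfl | ⟨w, hw, hp⟩
    · exact Or.inr ⟨z, hr, pathLe_refl r (n+1) z⟩
    · exact Or.inr ⟨w, hw, ih hp⟩

section Core

variable {V B : Type*} [Fintype B] [DecidableEq B] [DecidableEq V]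
variable (c : V → B) (E : Finset (V × V)) (k : ℕ)

/-- excess of block `b` -/
def exc (f : V → V → ℤ) (b : B) : ℤ := ∑ p ∈ E.filter (fun p => c p.1 = b), f p.1 p.2

/-- total imbalance -/
def KK (f : V → V → ℤ) : ℤ := ∑ b : B, |exc c E f b|

def rel (f : V → V → ℤ) (x y : B) : Prop :=
  ∃ p ∈ E, c p.1 = x ∧ c p.2 = y ∧ 0 < f p.1 p.2

def Good (f : V → V → ℤ) : Prop :=
  (∀ p ∈ E, f p.2 p.1 = - f p.1 p.2) ∧
  (∀ p ∈ E, f p.1 p.2 ≠ 0 ∧ |f p.1 p.2| < (k : ℤ)) ∧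
  (∀ b, (k : ℤ) ∣ exc c E f b)

def Step (f f₂ : V → V → ℤ) : Prop :=
  (∀ p : V × V, (k : ℤ) ∣ f₂ p.1 p.2 - f p.1 p.2) ∧
  (∀ p : V × V, p ∉ E → f₂ p.1 p.2 = f p.1 p.2)

variable {c E k}

theorem Step.refl (f : V → V → ℤ) : Step E k f f :=
  ⟨fun _ => by simp, fun _ _ => Eq.refl _⟩

theorem Step.trans {f₁ f₂ f₃ : V → V → ℤ} (h1 : Step E k f₁ f₂) (h2 : Step E k f₂ f₃) :
    Step E k f₁ f₃ := by
  refine ⟨fun p => ?_, fun p hp => (h2.2 p hp).trans (h1.2 p hp)⟩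
  have := dvd_add (h2.1 p) (h1.1 p)
  simpa using this

variable (c E k)

/-- the basic modification: add `a` on edge `p` and `-a` on its reverse. -/
def mdf (f : V → V → ℤ) (p : V × V) (a : ℤ) : V → V → ℤ :=
  fun x y => f x y + (if (x, y) = p then a else 0) + (if (x, y) = p.swap then -a else 0)

theorem mdf_eq_of_ne {f : V → V → ℤ} {p q : V × V} {a : ℤ} (h1 : q ≠ p) (h2 : q ≠ p.swap) :
    mdf f p a q.1 q.2 = f q.1 q.2 := by
  simp [mdf, h1, h2]

theorem mdf_fst {f : V → V → ℤ} {p : V × V} {a : ℤ} (hne : p.1 ≠ p.2) :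
    mdf f p a p.1 p.2 = f p.1 p.2 + a := by
  have h2 : ((p.1, p.2) : V × V) ≠ p.swap := by
    simp only [Prod.ext_iff, Prod.fst_swap, Prod.snd_swap, ne_eq, not_and]
    exact fun h => absurd h hne
  simp [mdf, h2]

theorem mdf_snd {f : V → V → ℤ} {p : V × V} {a : ℤ} (hne : p.1 ≠ p.2) :
    mdf f p a p.2 p.1 = f p.2 p.1 - a := by
  have h1 : ((p.2, p.1) : V × V) ≠ p := by
    simp only [Prod.ext_iff, ne_eq, not_and]
    exact fun h => absurd h.symm hne
  have h2 : ((p.2, p.1) : V × V) = p.swap := rfl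
  have h3 : p.swap ≠ p := fun h => hne ((Prod.ext_iff.mp h).1).symm
  simp [mdf, h1, h2, h3]
  ring

theorem mdf_antisym {f : V → V → ℤ} {p : V × V} {a : ℤ} {x y : V} (h : f y x = - f x y) :
    mdf f p a y x = - mdf f p a x y := by
  have h1 : (((y, x) : V × V) = p) ↔ (((x, y) : V × V) = p.swap) := by
    simp [Prod.ext_iff, and_comm]
  have h2 : (((y, x) : V × V) = p.swap) ↔ (((x, y) : V × V) = p) := by
    simp [Prod.ext_iff, and_comm]
  simp only [mdf, h]
  rw [if_congr h1 rfl rfl, if_congr h2 rfl rfl]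
  split_ifs <;> ring

variable {c E k}

theorem sum_mdf {f : V → V → ℤ} {p : V × V} {a : ℤ} (S : Finset (V × V)) :
    ∑ q ∈ S, mdf f p a q.1 q.2 =
      ∑ q ∈ S, f q.1 q.2 + (if p ∈ S then a else 0) + (if p.swap ∈ S then -a else 0) := by
  simp only [mdf]
  rw [Finset.sum_add_distrib, Finset.sum_add_distrib]
  congr 2
  · simpa using Finset.sum_ite_eq' S p (fun _ => a)
  · simpa using Finset.sum_ite_eq' S p.swap (fun _ => -a)

theorem exc_mdf {f : V → V → ℤ} {p : V × V} {a : ℤ} (hp : p ∈ E)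
    (hps : p.swap ∈ E) (b : B) :
    exc c E (mdf f p a) b = exc c E f b +
      (if c p.1 = b then a else 0) + (if c p.2 = b then -a else 0) := by
  unfold exc
  rw [sum_mdf]
  congr 2
  · simp [Finset.mem_filter, hp]
  · simp [Finset.mem_filter, hps]

theorem sum_two {h : B → ℤ} {b₁ b₂ : B} (hne : b₁ ≠ b₂)
    (h0 : ∀ b, b ≠ b₁ → b ≠ b₂ → h b = 0) :
    ∑ b : B, h b = h b₁ + h b₂ := by
  rw [← Finset.sum_pair hne]
  refine (Finset.sum_subset (Finset.subset_univ _) (fun b _ hb => ?_)).symm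
  simp only [Finset.mem_insert, Finset.mem_singleton, not_or] at hb
  exact h0 b hb.1 hb.2

/-- sum of an antisymmetric function over a swap-closed set of non-loops vanishes -/
theorem sum_swap_zero {f : V → V → ℤ} {S : Finset (V × V)}
    (hS : ∀ p ∈ S, p.swap ∈ S) (hirr : ∀ p ∈ S, p.1 ≠ p.2)
    (hanti : ∀ p ∈ S, f p.2 p.1 = - f p.1 p.2) :
    ∑ p ∈ S, f p.1 p.2 = 0 := by
  refine Finset.sum_involution (fun p _ => p.swap) (fun p hp => ?_) (fun p hp _ => ?_)
    (fun p hp => hS p hp) (fun p hp => Prod.swap_swap p)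
  · have := hanti p hp
    simp only [Prod.fst_swap, Prod.snd_swap]
    omega
  · intro h
    exact hirr p hp (congrArg Prod.snd h)

theorem sum_exc (hsym : ∀ p ∈ E, p.swap ∈ E) (hcross : ∀ p ∈ E, c p.1 ≠ c p.2)
    {f : V → V → ℤ} (hanti : ∀ p ∈ E, f p.2 p.1 = - f p.1 p.2) :
    ∑ b : B, exc c E f b = 0 := by
  unfold exc
  rw [Finset.sum_fiberwise E (fun p => c p.1) (fun p => f p.1 p.2)]
  exact sum_swap_zero hsym (fun p hp => fun h => hcross p hp (congrArg c h)) hanti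

theorem good_mdf (hsym : ∀ p ∈ E, p.swap ∈ E) (hcross : ∀ p ∈ E, c p.1 ≠ c p.2)
    (hk : 1 ≤ k) {f : V → V → ℤ} (hG : Good c E k f) {p : V × V} (hp : p ∈ E)
    (hfp : 0 < f p.1 p.2) :
    Good c E k (mdf f p (-(k : ℤ))) ∧ Step E k f (mdf f p (-(k : ℤ))) := by
  obtain ⟨hanti, hrange, hdvd⟩ := hG
  have hps : p.swap ∈ E := hsym p hp
  have hne : p.1 ≠ p.2 := fun h => hcross p hp (congrArg c h)
  have hlt : f p.1 p.2 < (k : ℤ) := (abs_lt.mp (hrange p hp).2).2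
  have hval : ∀ q ∈ E, mdf f p (-(k : ℤ)) q.1 q.2 = f q.1 q.2 ∨
      mdf f p (-(k : ℤ)) q.1 q.2 = f q.1 q.2 - k ∨
      mdf f p (-(k : ℤ)) q.1 q.2 = f q.1 q.2 + k := by
    intro q hq
    by_cases h1 : q = p
    · subst h1
      right; left
      have := mdf_fst (f := f) (a := -(k:ℤ)) hne
      omega
    · by_cases h2 : q = p.swap
      · subst h2
        right; right
        have := mdf_snd (f := f) (a := -(k:ℤ)) hne
        simp only [Prod.fst_swap, Prod.snd_swap] at this ⊢
        omega
      · left; exact mdf_eq_of_ne h1 h2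
  constructor
  · refine ⟨fun q hq => mdf_antisym (hanti q hq), fun q hq => ?_, fun b => ?_⟩
    · by_cases h1 : q = p
      · subst h1
        have h := mdf_fst (f := f) (a := -(k:ℤ)) hne
        rw [h]
        constructor
        · omega
        · rw [abs_lt]; omega
      · by_cases h2 : q = p.swap
        · subst h2
          have h := mdf_snd (f := f) (a := -(k:ℤ)) hne
          simp only [Prod.fst_swap, Prod.snd_swap] at h ⊢
          rw [h]
          have h3 : f p.2 p.1 = - f p.1 p.2 := hanti p hp
          constructor
          · omega
          · rw [abs_lt]; omega
        · rw [mdf_eq_of_ne h1 h2]; exact hrange q hq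
    · rw [exc_mdf hp hps]
      refine dvd_add (dvd_add (hdvd b) ?_) ?_ <;> split_ifs <;> simp
  · constructor
    · intro q
      by_cases hq : q ∈ E
      · rcases hval q hq with h | h | h <;> rw [h] <;> simp
      · have h1 : q ≠ p := fun h => hq (h ▸ hp)
        have h2 : q ≠ p.swap := fun h => hq (h ▸ hps)
        rw [mdf_eq_of_ne h1 h2]; simp
    · intro q hq
      have h1 : q ≠ p := fun h => hq (h ▸ hp)
      have h2 : q ≠ p.swap := fun h => hq (h ▸ hps)
      exact mdf_eq_of_ne h1 h2

theorem exc_mdf_eq {f : V → V → ℤ} {p : V × V} {a : ℤ} (hp : p ∈ E)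
    (hps : p.swap ∈ E) (hcr : c p.1 ≠ c p.2) :
    exc c E (mdf f p a) (c p.1) = exc c E f (c p.1) + a ∧
    exc c E (mdf f p a) (c p.2) = exc c E f (c p.2) - a ∧
    ∀ b, b ≠ c p.1 → b ≠ c p.2 → exc c E (mdf f p a) b = exc c E f b := by
  refine ⟨?_, ?_, fun b h1 h2 => ?_⟩ <;> rw [exc_mdf hp hps]
  · simp [Ne.symm hcr]
  · simp only [hcr, if_false, Ne.symm hcr]
    simp
    ring
  · simp [Ne.symm h1, Ne.symm h2]

theorem KK_mdf {f : V → V → ℤ} {p : V × V} {a : ℤ} (hp : p ∈ E)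
    (hps : p.swap ∈ E) (hcr : c p.1 ≠ c p.2) :
    KK c E (mdf f p a) = KK c E f +
      (|exc c E f (c p.1) + a| - |exc c E f (c p.1)|) +
      (|exc c E f (c p.2) - a| - |exc c E f (c p.2)|) := by
  obtain ⟨h1, h2, h3⟩ := exc_mdf_eq (f := f) (a := a) hp hps hcr
  have key : ∑ b : B, (|exc c E (mdf f p a) b| - |exc c E f b|) =
      (|exc c E f (c p.1) + a| - |exc c E f (c p.1)|) +
      (|exc c E f (c p.2) - a| - |exc c E f (c p.2)|) := by
    rw [sum_two hcr (fun b hb1 hb2 => by rw [h3 b hb1 hb2]; ring), h1, h2]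
  rw [Finset.sum_sub_distrib] at key
  unfold KK at *
  omega

theorem rel_mdf {f : V → V → ℤ} {p : V × V} (hp : p ∈ E) (hfp : 0 < f p.1 p.2)
    (hanti : ∀ q ∈ E, f q.2 q.1 = - f q.1 q.2) {a : ℤ} {x z : B}
    (h : rel c E f x z) :
    rel c E (mdf f p a) x z ∨ (x = c p.1 ∧ z = c p.2) := by
  obtain ⟨q, hq, hq1, hq2, hqpos⟩ := h
  by_cases h1 : q = p
  · subst h1; exact Or.inr ⟨hq1.symm, hq2.symm⟩
  · by_cases h2 : q = p.swap
    · exfalso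
      subst h2
      have := hanti p hp
      simp only [Prod.fst_swap, Prod.snd_swap] at hqpos
      omega
    · exact Or.inl ⟨q, hq, hq1, hq2, by rw [mdf_eq_of_ne h1 h2]; exact hqpos⟩

theorem transfer {f : V → V → ℤ} {p : V × V} (hp : p ∈ E) (hfp : 0 < f p.1 p.2)
    (hanti : ∀ q ∈ E, f q.2 q.1 = - f q.1 q.2) (a : ℤ) (b₁ : B) :
    ∀ m x, pathLe (rel c E f) m x b₁ →
      pathLe (rel c E (mdf f p a)) m x b₁ ∨ pathLe (rel c E (mdf f p a)) m (c p.2) b₁ := by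
  intro m
  induction m with
  | zero => exact fun x h => Or.inl h
  | succ m ih =>
    intro x hx
    rcases hx with rfl | ⟨z, hxz, hrest⟩
    · exact Or.inl (Or.inl rfl)
    · rcases ih z hrest with hL | hR
      · rcases rel_mdf hp hfp hanti (a := a) hxz with hg | ⟨hx1, hz2⟩
        · exact Or.inl (Or.inr ⟨z, hg, hL⟩)
        · exact Or.inr (pathLe_succ (hz2 ▸ hL))
      · exact Or.inr (pathLe_succ hR)

theorem KK_nonneg (f : V → V → ℤ) : 0 ≤ KK c E f :=
  Finset.sum_nonneg fun b _ => abs_nonneg _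

theorem exc_eq_zero_of_KK {f : V → V → ℤ} (h : KK c E f ≤ 0) : ∀ b, exc c E f b = 0 := by
  have h0 : KK c E f = 0 := le_antisymm h (KK_nonneg f)
  intro b
  have := (Finset.sum_eq_zero_iff_of_nonneg (fun b _ => abs_nonneg (exc c E f b))).mp h0
  exact abs_eq_zero.mp (this b (Finset.mem_univ b))

theorem descend (hsym : ∀ p ∈ E, p.swap ∈ E) (hcross : ∀ p ∈ E, c p.1 ≠ c p.2)
    (hk : 1 ≤ k) :
    ∀ n : ℕ, ∀ f : V → V → ℤ, Good c E k f → ∀ a b₁ : B,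
      (k : ℤ) ≤ exc c E f a → exc c E f b₁ ≤ -(k : ℤ) → pathLe (rel c E f) n a b₁ →
      ∃ f₂, Good c E k f₂ ∧ Step E k f f₂ ∧ KK c E f₂ < KK c E f := by
  intro n
  induction n with
  | zero =>
    intro f hG a b₁ ha hb₁ hpath
    exfalso
    cases hpath
    omega
  | succ n ih =>
    intro f hG a b₁ ha hb₁ hpath
    rcases hpath with rfl | ⟨z, hrelaz, hpath⟩
    · exfalso; omega
    obtain ⟨p, hp, hc1, hc2, hfp⟩ := hrelaz
    have hps : p.swap ∈ E := hsym p hp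
    have hcr : c p.1 ≠ c p.2 := hcross p hp
    have hdvdz := hG.2.2 z
    obtain ⟨hGg, hSg⟩ := good_mdf hsym hcross hk hG hp hfp
    have hKK := KK_mdf (f := f) (a := -(k:ℤ)) hp hps hcr
    rw [hc1, hc2] at hKK
    obtain ⟨he1, he2, he3⟩ := exc_mdf_eq (f := f) (a := -(k:ℤ)) hp hps hcr
    rw [hc1] at he1
    rw [hc2] at he2
    rcases lt_trichotomy (exc c E f z) 0 with hneg | heq0 | hpos
    · -- z has negative excess: modify p, imbalance drops by 2k
      have hzk : exc c E f z ≤ -(k : ℤ) := by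
        have h2 := Int.le_of_dvd (by omega) (Dvd.dvd.neg_right hdvdz)
        omega
      refine ⟨mdf f p (-(k:ℤ)), hGg, hSg, ?_⟩
      have h1 : |exc c E f a + -(k:ℤ)| = exc c E f a - k := by
        rw [abs_of_nonneg] <;> omega
      have h2 : |exc c E f a| = exc c E f a := abs_of_nonneg (by omega)
      have h3 : |exc c E f z - -(k:ℤ)| = -(exc c E f z) - k := by
        rw [abs_of_nonpos] <;> omega
      have h4 : |exc c E f z| = -(exc c E f z) := abs_of_nonpos (by omega)
      rw [hKK, h1, h2, h3, h4]
      omega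
    · -- z has zero excess: modify p, imbalance unchanged, recurse
      have hKKeq : KK c E (mdf f p (-(k:ℤ))) = KK c E f := by
        have h1 : |exc c E f a + -(k:ℤ)| = exc c E f a - k := by
          rw [abs_of_nonneg] <;> omega
        have h2 : |exc c E f a| = exc c E f a := abs_of_nonneg (by omega)
        rw [hKK, h1, h2, heq0]
        simp
      have hzb : z ≠ b₁ := fun h => by rw [← h, heq0] at hb₁; omega
      have hab : a ≠ b₁ := fun h => by rw [h] at ha; omega
      have haz : a ≠ z := fun h => by rw [h, heq0] at ha; omega
      have hpathg : pathLe (rel c E (mdf f p (-(k:ℤ)))) n z b₁ := by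
        rcases transfer hp hfp hG.1 (-(k:ℤ)) b₁ n z hpath with hL | hR
        · exact hL
        · rw [← hc2]; exact hR
      have hexcg_z : (k : ℤ) ≤ exc c E (mdf f p (-(k:ℤ))) z := by
        rw [he2, heq0]
        omega
      have hexcg_b : exc c E (mdf f p (-(k:ℤ))) b₁ ≤ -(k : ℤ) := by
        rw [he3 b₁ (by rw [hc1]; exact fun h => hab h.symm) (by rw [hc2]; exact fun h => hzb h.symm)]
        exact hb₁
      obtain ⟨f₃, hG₃, hS₃, hKK₃⟩ := ih (mdf f p (-(k:ℤ))) hGg z b₁ hexcg_z hexcg_b hpathg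
      exact ⟨f₃, hG₃, Step.trans hSg hS₃, by omega⟩
    · -- z has positive excess: recurse along shorter path
      have hzk : (k : ℤ) ≤ exc c E f z := Int.le_of_dvd hpos hdvdz
      exact ih f hG z b₁ hzk hb₁ hpath

theorem core_main (hsym : ∀ p ∈ E, p.swap ∈ E) (hcross : ∀ p ∈ E, c p.1 ≠ c p.2)
    (hk : 1 ≤ k) :
    ∀ n : ℕ, ∀ f : V → V → ℤ, Good c E k f → KK c E f ≤ n →
      ∃ f', Good c E k f' ∧ Step E k f f' ∧ ∀ b, exc c E f' b = 0 := by
  intro n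
  induction n with
  | zero =>
    intro f hG hKK
    exact ⟨f, hG, Step.refl f, exc_eq_zero_of_KK (by exact_mod_cast hKK)⟩
  | succ n ih =>
    intro f hG hKK
    classical
    by_cases hzero : ∀ b, exc c E f b = 0
    · exact ⟨f, hG, Step.refl f, hzero⟩
    push_neg at hzero
    obtain ⟨b', hb'⟩ := hzero
    -- there is a block with positive excess
    have hsum : ∑ b : B, exc c E f b = 0 := sum_exc hsym hcross hG.1
    have hpos : ∃ b₀, 0 < exc c E f b₀ := by
      by_contra h
      push_neg at h
      have := (Finset.sum_eq_zero_iff_of_nonpos (fun b _ => h b)).mp hsum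
      exact hb' (this b' (Finset.mem_univ b'))
    obtain ⟨b₀, hb₀⟩ := hpos
    have hb₀k : (k : ℤ) ≤ exc c E f b₀ := Int.le_of_dvd hb₀ (hG.2.2 b₀)
    -- the set of blocks reachable from b₀
    set R : Set B := {b | ∃ m, pathLe (rel c E f) m b₀ b} with hR
    have hneg : ∃ b₁ ∈ R, exc c E f b₁ < 0 := by
      by_contra h
      push_neg at h
      set R' : Finset B := Finset.univ.filter (· ∈ R) with hR'
      have hmemR' : ∀ b, b ∈ R' ↔ b ∈ R := by
        intro b; simp [hR']
      have hb₀R : b₀ ∈ R' := (hmemR' b₀).mpr ⟨0, rfl⟩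
      have h1 : (k : ℤ) ≤ ∑ b ∈ R', exc c E f b := by
        refine le_trans hb₀k (Finset.single_le_sum (fun b hb => h b ((hmemR' b).mp hb)) hb₀R)
      set S : Finset (V × V) := E.filter (fun p => c p.1 ∈ R) with hS
      have h2 : ∑ b ∈ R', exc c E f b = ∑ p ∈ S, f p.1 p.2 := by
        rw [← Finset.sum_fiberwise_of_maps_to (s := S) (t := R') (g := fun p : V × V => c p.1)
          (fun p hp => (hmemR' _).mpr (Finset.mem_filter.mp hp).2) (fun p : V × V => f p.1 p.2)]
        refine Finset.sum_congr rfl fun b hb => ?_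
        unfold exc
        congr 1
        rw [hS, Finset.filter_filter]
        refine Finset.filter_congr fun p hp => ?_
        constructor
        · exact fun hc => ⟨hc ▸ (hmemR' b).mp hb, hc⟩
        · exact fun hc => hc.2
      have hclosed : ∀ p ∈ E, c p.1 ∈ R → 0 < f p.1 p.2 → c p.2 ∈ R := by
        rintro p hp ⟨m, hm⟩ hfp
        exact ⟨m + 1, pathLe_snoc hm ⟨p, hp, rfl, rfl, hfp⟩⟩
      have h3 : ∑ p ∈ S, f p.1 p.2 =
          ∑ p ∈ S.filter (fun p => c p.2 ∈ R), f p.1 p.2 +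
          ∑ p ∈ S.filter (fun p => ¬ c p.2 ∈ R), f p.1 p.2 :=
        (Finset.sum_filter_add_sum_filter_not S _ _).symm
      have h4 : ∑ p ∈ S.filter (fun p => c p.2 ∈ R), f p.1 p.2 = 0 := by
        refine sum_swap_zero (fun p hp => ?_) (fun p hp => ?_) (fun p hp => ?_)
        · simp only [hS, Finset.mem_filter] at hp ⊢
          exact ⟨⟨hsym p hp.1.1, hp.2⟩, hp.1.2⟩
        · simp only [hS, Finset.mem_filter] at hp
          exact fun h' => hcross p hp.1.1 (congrArg c h')
        · simp only [hS, Finset.mem_filter] at hp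
          exact hG.1 p hp.1.1
      have h5 : ∑ p ∈ S.filter (fun p => ¬ c p.2 ∈ R), f p.1 p.2 ≤ 0 := by
        refine Finset.sum_nonpos fun p hp => ?_
        simp only [hS, Finset.mem_filter] at hp
        by_contra hcon
        push_neg at hcon
        exact hp.2 (hclosed p hp.1.1 hp.1.2 (by omega))
      omega
    obtain ⟨b₁, ⟨m, hm⟩, hb₁neg⟩ := hneg
    have hb₁k : exc c E f b₁ ≤ -(k : ℤ) := by
      have h2 := Int.le_of_dvd (by omega) (Dvd.dvd.neg_right (hG.2.2 b₁))
      omega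
    obtain ⟨f₂, hG₂, hS₂, hKK₂⟩ := descend hsym hcross hk m f hG b₀ b₁ hb₀k hb₁k hm
    have : KK c E f₂ ≤ n := by
      have := KK_nonneg (c := c) (E := E) f₂
      push_cast at hKK ⊢
      omega
    obtain ⟨f', hG', hS', hz'⟩ := ih f₂ hG₂ this
    exact ⟨f', hG', Step.trans hS₂ hS', hz'⟩

end Core

/-- canonical antisymmetric integer lift of an antisymmetric `ZMod k`-valued map -/
theorem exists_canonical_lift {V : Type*} (k : ℕ) (hk : 1 ≤ k) (g : V → V → ZMod k)
    (hanti : ∀ x y : V, g y x = - g x y) :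
    ∃ f₀ : V → V → ℤ, (∀ x y : V, f₀ y x = - f₀ x y) ∧ (∀ x y : V, |f₀ x y| < (k : ℤ)) ∧
      (∀ x y : V, x ≠ y → ((f₀ x y : ℤ) : ZMod k) = g x y) ∧
      (∀ x y : V, x ≠ y → g x y ≠ 0 → f₀ x y ≠ 0) := by
  classical
  haveI : NeZero k := ⟨by omega⟩
  letI : LinearOrder V := @linearOrderOfSTO V WellOrderingRel ⟨⟩ (Classical.decRel _)
  refine ⟨fun x y => if x < y then ((g x y).val : ℤ) else if y < x then -((g y x).val : ℤ)
    else 0, fun x y => ?_, fun x y => ?_, fun x y hne => ?_, fun x y hne hg0 => ?_⟩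
  · rcases lt_trichotomy x y with h | h | h
    · simp [h, not_lt_of_gt h, lt_asymm h]
    · subst h; simp [lt_irrefl]
    · simp [h, not_lt_of_gt h, lt_asymm h]
  · have h1 : ((g x y).val : ℤ) < (k : ℤ) := by exact_mod_cast ZMod.val_lt (g x y)
    have h2 : ((g y x).val : ℤ) < (k : ℤ) := by exact_mod_cast ZMod.val_lt (g y x)
    have h3 : (0 : ℤ) ≤ ((g x y).val : ℤ) := Int.natCast_nonneg _
    have h4 : (0 : ℤ) ≤ ((g y x).val : ℤ) := Int.natCast_nonneg _
    dsimp only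
    split_ifs <;> rw [abs_lt] <;> omega
  · rcases lt_trichotomy x y with h | h | h
    · simp only [h, if_true]
      push_cast
      exact ZMod.natCast_rightInverse (g x y)
    · exact absurd h hne
    · simp only [not_lt_of_gt h, lt_asymm h, h, if_false, if_true]
      push_cast
      rw [ZMod.natCast_rightInverse (g y x), hanti x y, neg_neg]
  · rcases lt_trichotomy x y with h | h | h
    · simp only [h, if_true, ne_eq, Int.natCast_eq_zero]
      exact fun hv => hg0 ((ZMod.val_eq_zero _).mp hv)
    · exact absurd h hne
    · simp only [not_lt_of_gt h, lt_asymm h, h, if_false, if_true, ne_eq, neg_eq_zero,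
        Int.natCast_eq_zero]
      intro hv
      have : g y x = 0 := (ZMod.val_eq_zero _).mp hv
      have h2 := hanti x y
      rw [this] at h2
      exact hg0 (neg_eq_zero.mp h2.symm)

/-- finite satisfiability: a lift balancing any finite family of finite cuts -/
theorem finite_family {V : Type*} (G : SimpleGraph V) (k : ℕ) (hk : 1 ≤ k)
    (g : V → V → ZMod k) (hg : IsNonElusiveZModFlow G k g)
    (u : Finset {X : Set V // (orientedCut G X).Finite}) :
    ∃ f : V → V → ℤ,
      (∀ x y : V, f y x = - f x y) ∧
      (∀ x y : V, |f x y| < (k : ℤ)) ∧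
      (∀ x y : V, G.Adj x y → f x y ≠ 0) ∧
      ∀ X ∈ u, ∑ p ∈ X.2.toFinset, f p.1 p.2 = 0 := by
  classical
  haveI : NeZero k := ⟨by omega⟩
  obtain ⟨f₀, hf₀anti, hf₀lt, hf₀cong, hf₀ne⟩ := exists_canonical_lift k hk g hg.2.1
  set β : V → ({i // i ∈ u} → Bool) := fun v i => decide (v ∈ i.1.1) with hβ
  set S : Set (V × V) := {p | G.Adj p.1 p.2 ∧ β p.1 ≠ β p.2} with hSdef
  have hβmem : ∀ (v : V) (i : {i // i ∈ u}), β v i = true ↔ v ∈ i.1.1 := by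
    intro v i; simp [hβ]
  have hSfin : S.Finite := by
    have hsub : S ⊆ ⋃ (i : {i // i ∈ u}),
        (orientedCut G i.1.1 ∪ Prod.swap ⁻¹' orientedCut G i.1.1) := by
      rintro p ⟨hadj, hne⟩
      obtain ⟨i, hi⟩ := Function.ne_iff.mp hne
      refine Set.mem_iUnion.mpr ⟨i, ?_⟩
      by_cases h1 : p.1 ∈ i.1.1
      · have h2 : p.2 ∉ i.1.1 := by
          intro h2
          exact hi (by rw [(hβmem p.1 i).mpr h1, (hβmem p.2 i).mpr h2])
        exact Or.inl ⟨hadj, h1, h2⟩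
      · have h2 : p.2 ∈ i.1.1 := by
          by_contra h2
          refine hi ?_
          have e1 : β p.1 i = false := by
            rw [← Bool.not_eq_true]; exact fun h => h1 ((hβmem p.1 i).mp h)
          have e2 : β p.2 i = false := by
            rw [← Bool.not_eq_true]; exact fun h => h2 ((hβmem p.2 i).mp h)
          rw [e1, e2]
        exact Or.inr ⟨hadj.symm, h2, h1⟩
    refine Set.Finite.subset (Set.finite_iUnion fun i => ?_) hsub
    exact (i.1.2).union ((i.1.2).preimage (Prod.swap_injective.injOn))
  set E : Finset (V × V) := hSfin.toFinset with hE
  have hmemE : ∀ p : V × V, p ∈ E ↔ G.Adj p.1 p.2 ∧ β p.1 ≠ β p.2 := by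
    intro p; rw [hE, Set.Finite.mem_toFinset]; rfl
  have hsym : ∀ p ∈ E, p.swap ∈ E := by
    intro p hp
    rw [hmemE] at hp ⊢
    exact ⟨hp.1.symm, hp.2.symm⟩
  have hcross : ∀ p ∈ E, β p.1 ≠ β p.2 := fun p hp => ((hmemE p).mp hp).2
  -- the cut determined by a block is a finite cut of G
  have hblockcut : ∀ b : {i // i ∈ u} → Bool,
      orientedCut G {v | β v = b} = ↑(E.filter (fun p => β p.1 = b)) := by
    intro b
    ext p
    rw [Finset.mem_coe, Finset.mem_filter, hmemE]
    simp only [orientedCut, Set.mem_setOf_eq]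
    constructor
    · rintro ⟨hadj, h1, h2⟩
      exact ⟨⟨hadj, fun h => h2 (h ▸ h1)⟩, h1⟩
    · rintro ⟨⟨hadj, hne⟩, h1⟩
      exact ⟨hadj, h1, fun h2 => hne (h1.trans h2.symm)⟩
  have hGood : Good β E k f₀ := by
    refine ⟨fun p _ => hf₀anti p.1 p.2, fun p hp => ?_, fun b => ?_⟩
    · have hadj := ((hmemE p).mp hp).1
      exact ⟨hf₀ne p.1 p.2 hadj.ne (hg.1 p.1 p.2 hadj), hf₀lt p.1 p.2⟩
    · have hfin : (orientedCut G {v | β v = b}).Finite := by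
        rw [hblockcut b]; exact (E.filter _).finite_toSet
      have hzero := hg.2.2 {v | β v = b} hfin
      rw [hblockcut b, finsum_mem_coe_finset] at hzero
      have hcast : ((exc β E f₀ b : ℤ) : ZMod k) = 0 := by
        unfold exc
        push_cast
        rw [← hzero]
        refine Finset.sum_congr rfl fun p hp => ?_
        have hadj := ((hmemE p).mp (Finset.mem_filter.mp hp).1).1
        exact hf₀cong p.1 p.2 hadj.ne
      exact (ZMod.intCast_zmod_eq_zero_iff_dvd _ k).mp hcast
  obtain ⟨f', hG', hS', hz'⟩ := core_main hsym hcross hk (KK β E f₀).toNat f₀ hGood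
    (Int.self_le_toNat _)
  have hoffE : ∀ p : V × V, p ∉ E → f' p.1 p.2 = f₀ p.1 p.2 := hS'.2
  have hanti' : ∀ x y : V, f' y x = - f' x y := by
    intro x y
    by_cases h : ((x, y) : V × V) ∈ E
    · exact hG'.1 (x, y) h
    · have h2 : ((y, x) : V × V) ∉ E := fun h2 => h (by simpa using hsym (y, x) h2)
      rw [hoffE (y, x) h2, hoffE (x, y) h]
      exact hf₀anti x y
  have hlt' : ∀ x y : V, |f' x y| < (k : ℤ) := by
    intro x y
    by_cases h : ((x, y) : V × V) ∈ E
    · exact (hG'.2.1 (x, y) h).2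
    · rw [hoffE (x, y) h]; exact hf₀lt x y
  have hnz' : ∀ x y : V, G.Adj x y → f' x y ≠ 0 := by
    intro x y hadj
    by_cases h : ((x, y) : V × V) ∈ E
    · exact (hG'.2.1 (x, y) h).1
    · rw [hoffE (x, y) h]
      exact hf₀ne x y hadj.ne (hg.1 x y hadj)
  refine ⟨f', hanti', hlt', hnz', fun X hXu => ?_⟩
  -- the cut of X equals the crossing edges from X to its complement
  set i : {i // i ∈ u} := ⟨X, hXu⟩ with hi
  have hcutE : X.2.toFinset = (E.filter (fun p => p.1 ∈ X.1)).filter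
      (fun p => ¬ p.2 ∈ X.1) := by
    ext p
    simp only [Set.Finite.mem_toFinset, Finset.mem_filter, hmemE]
    constructor
    · rintro ⟨hadj, h1, h2⟩
      refine ⟨⟨⟨hadj, fun h => ?_⟩, h1⟩, h2⟩
      have := congrFun h i
      rw [(hβmem p.1 i).mpr h1] at this
      exact h2 ((hβmem p.2 i).mp this.symm)
    · rintro ⟨⟨⟨hadj, _⟩, h1⟩, h2⟩
      exact ⟨hadj, h1, h2⟩
  have hsplit := Finset.sum_filter_add_sum_filter_not (E.filter (fun p => p.1 ∈ X.1))
    (fun p => p.2 ∈ X.1) (fun p => f' p.1 p.2)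
  have hinternal : ∑ p ∈ (E.filter (fun p => p.1 ∈ X.1)).filter (fun p => p.2 ∈ X.1),
      f' p.1 p.2 = 0 := by
    refine sum_swap_zero (fun p hp => ?_) (fun p hp => ?_) (fun p hp => hanti' p.1 p.2)
    · simp only [Finset.mem_filter] at hp ⊢
      exact ⟨⟨hsym p hp.1.1, hp.2⟩, hp.1.2⟩
    · simp only [Finset.mem_filter] at hp
      exact fun h => (hcross p hp.1.1) (congrArg β h)
  have htotal : ∑ p ∈ E.filter (fun p => p.1 ∈ X.1), f' p.1 p.2 = 0 := by
    have hmaps : ∀ p ∈ E.filter (fun p => p.1 ∈ X.1),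
        β p.1 ∈ Finset.univ.filter (fun b : {i // i ∈ u} → Bool => b i = true) := by
      intro p hp
      simp only [Finset.mem_filter, Finset.mem_univ, true_and]
      exact (hβmem p.1 i).mpr (Finset.mem_filter.mp hp).2
    rw [← Finset.sum_fiberwise_of_maps_to (s := E.filter (fun p => p.1 ∈ X.1))
      (g := fun p : V × V => β p.1) hmaps (fun p : V × V => f' p.1 p.2)]
    refine Finset.sum_eq_zero fun b hb => ?_
    have hbi : b i = true := (Finset.mem_filter.mp hb).2
    have : (E.filter (fun p => p.1 ∈ X.1)).filter (fun p => β p.1 = b) =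
        E.filter (fun p => β p.1 = b) := by
      rw [Finset.filter_filter]
      refine Finset.filter_congr fun p hp => ?_
      constructor
      · exact fun h => h.2
      · exact fun h => ⟨(hβmem p.1 i).mp (h ▸ hbi), h⟩
    rw [this]
    exact hz' b
  rw [hcutE]
  omega

end KFlowAux

open KFlowAux in
/-- A (possibly infinite) graph has a `k`-flow iff it has a non-elusive `ℤ_k`-flow. -/
theorem stmt2 {V : Type*} (G : SimpleGraph V) (k : ℕ) (hk : 1 ≤ k) :
    (∃ f : V → V → ℤ, IsKFlow G k f) ↔
      (∃ g : V → V → ZMod k, IsNonElusiveZModFlow G k g) := by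
  constructor
  · rintro ⟨f, hf1, hf2, hf3⟩
    refine ⟨fun x y => ((f x y : ℤ) : ZMod k), fun x y hadj => ?_, fun x y => ?_,
      fun X hX => ?_⟩
    · intro h0
      have hdvd := (ZMod.intCast_zmod_eq_zero_iff_dvd _ k).mp h0
      exact (hf1 x y hadj).1 (Int.eq_zero_of_abs_lt_dvd hdvd (hf1 x y hadj).2)
    · dsimp only; rw [hf2 x y]; push_cast; ring
    · have hsum := hf3 X hX
      rw [← Set.Finite.coe_toFinset hX, finsum_mem_coe_finset] at hsum ⊢
      dsimp only
      rw [← Int.cast_sum, hsum, Int.cast_zero]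
  · rintro ⟨g, hg⟩
    classical
    haveI : NeZero k := ⟨by omega⟩
    set Ω := ((V × V) → (Set.Icc (-(k : ℤ)) (k : ℤ))) with hΩ
    set s : Set Ω := {F | (∀ x y : V, ((F (y, x) : ℤ) = -(F (x, y) : ℤ))) ∧
      ∀ x y : V, G.Adj x y → ((F (x, y) : ℤ) ≠ 0 ∧ |(F (x, y) : ℤ)| < (k : ℤ))} with hs
    set t : {X : Set V // (orientedCut G X).Finite} → Set Ω :=
      fun X => {F | ∑ p ∈ X.2.toFinset, (F p : ℤ) = 0} with ht
    have hs_closed : IsClosed s := by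
      have hrw : s = ⋂ (q : V × V),
          ((fun F : Ω => (((F (q.2, q.1) : ℤ)), ((F (q.1, q.2) : ℤ)))) ⁻¹'
          {z : ℤ × ℤ | z.1 = -z.2 ∧ (G.Adj q.1 q.2 → (z.2 ≠ 0 ∧ |z.2| < (k : ℤ)))}) := by
        ext F
        simp only [hs, Set.mem_setOf_eq, Set.mem_iInter, Set.mem_preimage]
        constructor
        · rintro ⟨h1, h2⟩ q
          exact ⟨h1 q.1 q.2, h2 q.1 q.2⟩
        · intro h
          exact ⟨fun x y => (h (x, y)).1, fun x y => (h (x, y)).2⟩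
      rw [hrw]
      refine isClosed_iInter fun q => IsClosed.preimage ?_ (isClosed_discrete _)
      exact (continuous_subtype_val.comp (continuous_apply (q.2, q.1))).prodMk
        (continuous_subtype_val.comp (continuous_apply (q.1, q.2)))
    have ht_closed : ∀ X, IsClosed (t X) := by
      intro X
      have : t X = (fun F : Ω => ∑ p ∈ X.2.toFinset, (F p : ℤ)) ⁻¹' {0} := rfl
      rw [this]
      refine IsClosed.preimage ?_ isClosed_singleton
      exact continuous_finset_sum _ fun p _ =>
        continuous_subtype_val.comp (continuous_apply p)
    have hne : (s ∩ ⋂ X, t X).Nonempty := by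
      rw [Set.nonempty_iff_ne_empty]
      intro hempty
      obtain ⟨u, hu⟩ := (hs_closed.isCompact).elim_finite_subfamily_closed t ht_closed hempty
      obtain ⟨f, hanti, hlt, hnz, hcut⟩ := finite_family G k hk g hg u
      have hbd : ∀ p : V × V, f p.1 p.2 ∈ Set.Icc (-(k : ℤ)) (k : ℤ) := by
        intro p
        have := abs_lt.mp (hlt p.1 p.2)
        exact Set.mem_Icc.mpr ⟨by omega, by omega⟩
      set F : Ω := fun p => ⟨f p.1 p.2, hbd p⟩ with hF
      have hFs : F ∈ s := ⟨fun x y => hanti x y, fun x y hadj => ⟨hnz x y hadj, hlt x y⟩⟩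
      have hFt : F ∈ ⋂ X ∈ u, t X := by
        refine Set.mem_iInter₂.mpr fun X hX => ?_
        show ∑ p ∈ X.2.toFinset, ((F p : ℤ)) = 0
        have := hcut X hX
        rw [← this]
      rw [Set.eq_empty_iff_forall_notMem] at hu
      exact hu F ⟨hFs, hFt⟩
    obtain ⟨F, hFs, hFt⟩ := hne
    refine ⟨fun x y => (F (x, y) : ℤ), fun x y hadj => hFs.2 x y hadj,
      fun x y => hFs.1 x y, fun X hX => ?_⟩
    have hmem := Set.mem_iInter.mp hFt ⟨X, hX⟩
    rw [← Set.Finite.coe_toFinset hX, finsum_mem_coe_finset]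
    rw [← hmem]
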